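/- Let A, B : ℝ → Mₙ(ℂ) be differentiable families of Hermitian idempotent matrices, let F(x) = diag(A(x), B(x)), let X(t) = [[cos(t)·Iₙ, sin(t)·Iₙ], [−sin(t)·Iₙ, cos(t)·Iₙ]], and set S(t,x) = X(t)·F(x)·X(t)⁻¹. Then for every k ≥ 0 and all (t,x): Tr( (I₂ₙ − 2·S(t,x)) · (∂S/∂t)(t,x) · ((∂S/∂x)(t,x))^{2k+1} ) = 0. -/

import Mathlib

open Matrix

/-- The rotation block matrix family `X(t) = [[cos t • 1, sin t • 1], [-sin t • 1, cos t • 1]]`. -/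
noncomputable def rotBlock (n : ℕ) (t : ℝ) :
    Matrix (Fin n ⊕ Fin n) (Fin n ⊕ Fin n) ℂ :=
  Matrix.fromBlocks ((Real.cos t : ℂ) • 1) ((Real.sin t : ℂ) • 1)
    ((-(Real.sin t : ℝ) : ℂ) • 1) ((Real.cos t : ℂ) • 1)

namespace CSAux

/-- The block matrix `J = [[0,1],[-1,0]]`. -/
noncomputable def Jmat (n : ℕ) : Matrix (Fin n ⊕ Fin n) (Fin n ⊕ Fin n) ℂ :=
  Matrix.fromBlocks 0 1 (-1) 0

/-- The entrywise derivative of `rotBlock n`. -/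
noncomputable def rotD (n : ℕ) (t : ℝ) : Matrix (Fin n ⊕ Fin n) (Fin n ⊕ Fin n) ℂ :=
  Matrix.fromBlocks ((-(Real.sin t : ℝ) : ℂ) • 1) ((Real.cos t : ℂ) • 1)
    ((-(Real.cos t : ℝ) : ℂ) • 1) ((-(Real.sin t : ℝ) : ℂ) • 1)

lemma trace_fromBlocks {n : ℕ} (A B C D : Matrix (Fin n) (Fin n) ℂ) :
    (Matrix.fromBlocks A B C D).trace = A.trace + D.trace := by
  simp [Matrix.trace, Fintype.sum_sum_type]

lemma rot_mul_rot_neg (n : ℕ) (t : ℝ) : rotBlock n t * rotBlock n (-t) = 1 := by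
  have h : ((Real.cos t : ℂ)) * (Real.cos t : ℂ) + (Real.sin t : ℂ) * (Real.sin t : ℂ) = 1 := by
    norm_cast
    nlinarith [Real.sin_sq_add_cos_sq t]
  have key : ∀ a b : ℂ, (a • (1 : Matrix (Fin n) (Fin n) ℂ)) * (b • 1) = (a * b) • 1 := by
    intro a b; rw [Matrix.smul_mul, Matrix.mul_smul, one_mul, smul_smul]
  simp only [rotBlock, Real.cos_neg, Real.sin_neg, Complex.ofReal_neg,
    Matrix.fromBlocks_multiply, key, ← add_smul]
  rw [← Matrix.fromBlocks_one (l := Fin n) (m := Fin n) (α := ℂ)]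
  rw [show ((Real.cos t : ℂ) * (Real.cos t : ℂ) + (Real.sin t : ℂ) * - -(Real.sin t : ℂ)) = 1 by
    linear_combination h]
  rw [show ((Real.cos t : ℂ) * -(Real.sin t : ℂ) + (Real.sin t : ℂ) * (Real.cos t : ℂ)) = 0 by
    ring]
  rw [show (-(Real.sin t : ℂ) * (Real.cos t : ℂ) + (Real.cos t : ℂ) * - -(Real.sin t : ℂ)) = 0 by
    ring]
  rw [show (-(Real.sin t : ℂ) * -(Real.sin t : ℂ) + (Real.cos t : ℂ) * (Real.cos t : ℂ)) = 1 by
    linear_combination h]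
  simp

lemma rotD_eq_J_mul (n : ℕ) (t : ℝ) : rotD n t = Jmat n * rotBlock n t := by
  simp [rotD, Jmat, rotBlock, Matrix.fromBlocks_multiply]

lemma rotD_eq_mul_J (n : ℕ) (t : ℝ) : rotD n t = rotBlock n t * Jmat n := by
  simp [rotD, Jmat, rotBlock, Matrix.fromBlocks_multiply, Matrix.mul_smul, smul_smul]

lemma hasDerivAt_rot (n : ℕ) (t : ℝ) (i j : Fin n ⊕ Fin n) :
    HasDerivAt (fun s => rotBlock n s i j) (rotD n t i j) t := by
  rcases i with a | a <;> rcases j with b | b <;>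
    simp only [rotBlock, rotD, Matrix.fromBlocks_apply₁₁, Matrix.fromBlocks_apply₁₂,
      Matrix.fromBlocks_apply₂₁, Matrix.fromBlocks_apply₂₂, Matrix.smul_apply, smul_eq_mul]
  · have := (((Real.hasDerivAt_cos t).ofReal_comp).mul_const ((1 : Matrix (Fin n) (Fin n) ℂ) a b))
    simpa using this
  · have := (((Real.hasDerivAt_sin t).ofReal_comp).mul_const ((1 : Matrix (Fin n) (Fin n) ℂ) a b))
    simpa using this
  · have := ((((Real.hasDerivAt_sin t).neg).ofReal_comp).mul_const
      ((1 : Matrix (Fin n) (Fin n) ℂ) a b))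
    simpa using this
  · have := (((Real.hasDerivAt_cos t).ofReal_comp).mul_const ((1 : Matrix (Fin n) (Fin n) ℂ) a b))
    simpa using this

lemma hasDerivAt_rot_neg (n : ℕ) (t : ℝ) (i j : Fin n ⊕ Fin n) :
    HasDerivAt (fun s => rotBlock n (-s) i j) ((-(rotD n (-t))) i j) t := by
  have h := (hasDerivAt_rot n (-t) i j).scomp t ((hasDerivAt_id t).neg)
  change HasDerivAt (fun s => rotBlock n (-s) i j) _ t at h
  simpa using h

/-- entrywise derivative of a matrix product. -/
lemma hasDerivAt_matrix_mul {m : Type*} [Fintype m] {U V : ℝ → Matrix m m ℂ}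
    {U' V' : Matrix m m ℂ} {t : ℝ}
    (hU : ∀ i j, HasDerivAt (fun s => U s i j) (U' i j) t)
    (hV : ∀ i j, HasDerivAt (fun s => V s i j) (V' i j) t)
    (i j : m) :
    HasDerivAt (fun s => (U s * V s) i j) ((U' * V t + U t * V') i j) t := by
  simp only [Matrix.mul_apply, Matrix.add_apply]
  rw [← Finset.sum_add_distrib]
  exact HasDerivAt.fun_sum fun l _ => (hU i l).mul (hV l j)

lemma hasDerivAt_const_entry {m : Type*} (t : ℝ) (C : Matrix m m ℂ) (i j : m) :
    HasDerivAt (fun _ : ℝ => C i j) ((0 : Matrix m m ℂ) i j) t := by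
  simpa using hasDerivAt_const t (C i j)

/-- conjugation respects powers. -/
lemma conj_pow {m : Type*} [Fintype m] [DecidableEq m] (X Y G : Matrix m m ℂ)
    (hXY : X * Y = 1) (hYX : Y * X = 1) (p : ℕ) :
    (X * G * Y) ^ p = X * G ^ p * Y := by
  induction p with
  | zero => simp [hXY]
  | succ p ih =>
      rw [pow_succ, ih, pow_succ]
      calc X * G ^ p * Y * (X * G * Y) = X * G ^ p * (Y * X) * G * Y := by
            noncomm_ring
        _ = X * (G ^ p * G) * Y := by rw [hYX]; noncomm_ring

lemma fromBlocks_diag_pow {n : ℕ} (C D : Matrix (Fin n) (Fin n) ℂ) (p : ℕ) :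
    (Matrix.fromBlocks C 0 0 D) ^ p = Matrix.fromBlocks (C ^ p) 0 0 (D ^ p) := by
  induction p with
  | zero => simp [← Matrix.fromBlocks_one]
  | succ p ih => rw [pow_succ, ih, Matrix.fromBlocks_multiply]; simp [pow_succ]

lemma anticomm_pow {m : Type*} [Fintype m] [DecidableEq m] (P M : Matrix m m ℂ)
    (hPM : P * M = M - M * P) :
    ∀ j : ℕ, P * M ^ (2 * j + 1) = M ^ (2 * j + 1) - M ^ (2 * j + 1) * P := by
  have h2 : (P * M) * M = M * M - (M * P) * M := by rw [hPM]; noncomm_ring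
  have h3 : M * (P * M) = M * M - (M * M) * P := by rw [hPM]; noncomm_ring
  have hPM2 : P * (M * M) = (M * M) * P := by
    calc P * (M * M) = (P * M) * M := by rw [mul_assoc]
      _ = M * M - (M * P) * M := h2
      _ = M * M - M * (P * M) := by rw [mul_assoc]
      _ = M * M - (M * M - (M * M) * P) := by rw [h3]
      _ = (M * M) * P := by noncomm_ring
  intro j
  induction j with
  | zero => simpa using hPM
  | succ j ih =>
      have hexp : 2 * (j + 1) + 1 = 2 + (2 * j + 1) := by ring
      rw [hexp, pow_add, sq]
      calc P * (M * M * M ^ (2 * j + 1)) = (P * (M * M)) * M ^ (2 * j + 1) := by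
            noncomm_ring
        _ = (M * M) * (P * M ^ (2 * j + 1)) := by rw [hPM2, mul_assoc]
        _ = (M * M) * (M ^ (2 * j + 1) - M ^ (2 * j + 1) * P) := by rw [ih]
        _ = M * M * M ^ (2 * j + 1) - M * M * M ^ (2 * j + 1) * P := by noncomm_ring

/-- The abstract trace computation. -/
lemma trace_key {m : Type*} [Fintype m] [DecidableEq m] (P J N : Matrix m m ℂ)
    (hP2 : P * P = P) (hPN : P * N = N - N * P) :
    Matrix.trace ((1 - (2 : ℂ) • P) * (J * P - P * J) * N) = Matrix.trace (J * N) := by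
  have hb : Matrix.trace (P * J * N * P) = Matrix.trace (P * J * N) := by
    rw [Matrix.trace_mul_comm, ← mul_assoc, ← mul_assoc, hP2]
  have h0 : Matrix.trace (P * J * P * N) = 0 := by
    have e : P * J * P * N = P * J * N - P * J * N * P := by
      rw [mul_assoc (P * J), hPN]; noncomm_ring
    rw [e, Matrix.trace_sub, hb, sub_self]
  have e2 : (1 - (2 : ℂ) • P) * (J * P - P * J) * N =
      J * (P * N) - P * J * N - (2 : ℂ) • (P * J * P * N) + (2 : ℂ) • (P * (P * J) * N) := by
    noncomm_ring
  have e3 : P * (P * J) = P * J := by rw [← mul_assoc, hP2]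
  rw [e2, e3, hPN]
  have hc : Matrix.trace (J * (N - N * P)) = Matrix.trace (J * N) - Matrix.trace (P * J * N) := by
    rw [mul_sub, Matrix.trace_sub, ← mul_assoc, Matrix.trace_mul_comm (J * N) P, ← mul_assoc]
  simp only [Matrix.trace_add, Matrix.trace_sub, Matrix.trace_smul, h0, smul_eq_mul]
  rw [hc]
  ring

/-- The whole conjugation calculation, abstractly. -/
lemma conj_calc {m : Type*} [Fintype m] [DecidableEq m]
    (X Y J F Fd : Matrix m m ℂ) (hXY : X * Y = 1) (hYX : Y * X = 1)
    (hJX : J * X = X * J) (hFF : F * F = F) (hanti : F * Fd + Fd * F = Fd) (k : ℕ) :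
    Matrix.trace ((1 - (2 : ℂ) • (X * F * Y)) * (J * (X * F * Y) - (X * F * Y) * J) *
        (X * Fd * Y) ^ (2 * k + 1)) = Matrix.trace (J * Fd ^ (2 * k + 1)) := by
  have hP2 : (X * F * Y) * (X * F * Y) = X * F * Y := by
    calc (X * F * Y) * (X * F * Y) = X * (F * (Y * X) * F) * Y := by noncomm_ring
      _ = X * (F * F) * Y := by rw [hYX]; noncomm_ring
      _ = X * F * Y := by rw [hFF]
  have hPM : (X * F * Y) * (X * Fd * Y) = (X * Fd * Y) - (X * Fd * Y) * (X * F * Y) := by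
    have h1 : (X * F * Y) * (X * Fd * Y) = X * (F * Fd) * Y := by
      calc (X * F * Y) * (X * Fd * Y) = X * (F * (Y * X) * Fd) * Y := by noncomm_ring
        _ = X * (F * Fd) * Y := by rw [hYX]; noncomm_ring
    have h2 : (X * Fd * Y) * (X * F * Y) = X * (Fd * F) * Y := by
      calc (X * Fd * Y) * (X * F * Y) = X * (Fd * (Y * X) * F) * Y := by noncomm_ring
        _ = X * (Fd * F) * Y := by rw [hYX]; noncomm_ring
    rw [h1, h2, eq_sub_iff_add_eq]
    calc X * (F * Fd) * Y + X * (Fd * F) * Y = X * (F * Fd + Fd * F) * Y := by noncomm_ring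
      _ = X * Fd * Y := by rw [hanti]
  rw [trace_key (X * F * Y) J ((X * Fd * Y) ^ (2 * k + 1)) hP2 (anticomm_pow _ _ hPM k)]
  rw [conj_pow X Y Fd hXY hYX]
  have e1 : J * (X * Fd ^ (2 * k + 1) * Y) = (J * X * Fd ^ (2 * k + 1)) * Y := by noncomm_ring
  rw [e1, Matrix.trace_mul_comm]
  have e2 : Y * (J * X * Fd ^ (2 * k + 1)) = (Y * X) * (J * Fd ^ (2 * k + 1)) := by
    rw [hJX]; noncomm_ring
  rw [e2, hYX, one_mul]

end CSAux

open CSAux in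
/-- For differentiable families of Hermitian projections `A, B`, `F(x) = diag(A x, B x)` and
`S(t,x) = X(t) * F(x) * X(t)⁻¹`, the trace
`Tr((1 - 2 S) (∂ₜ S) (∂ₓ S)^(2k+1))` vanishes identically. -/
theorem trace_rot_conj_CS_integrand_eq_zero
    (n : ℕ) (A B : ℝ → Matrix (Fin n) (Fin n) ℂ)
    (hAh : ∀ x, (A x).IsHermitian) (hBh : ∀ x, (B x).IsHermitian)
    (hAi : ∀ x, A x * A x = A x) (hBi : ∀ x, B x * B x = B x)
    (hAd : ∀ x i j, DifferentiableAt ℝ (fun y => A y i j) x)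
    (hBd : ∀ x i j, DifferentiableAt ℝ (fun y => B y i j) x)
    (S St Sx : ℝ → ℝ → Matrix (Fin n ⊕ Fin n) (Fin n ⊕ Fin n) ℂ)
    (hS : ∀ t x, S t x =
      rotBlock n t * Matrix.fromBlocks (A x) 0 0 (B x) * (rotBlock n t)⁻¹)
    (hSt : ∀ t x i j, HasDerivAt (fun s => S s x i j) (St t x i j) t)
    (hSx : ∀ t x i j, HasDerivAt (fun y => S t y i j) (Sx t x i j) x) :
    ∀ (k : ℕ) (t x : ℝ),
      Matrix.trace ((1 - (2 : ℂ) • S t x) * St t x * (Sx t x) ^ (2 * k + 1)) = 0 := by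
  intro k t x
  have hXY : rotBlock n t * rotBlock n (-t) = 1 := rot_mul_rot_neg n t
  have hYX : rotBlock n (-t) * rotBlock n t = 1 := by
    have := rot_mul_rot_neg n (-t); rwa [neg_neg] at this
  have hXinv : ∀ s : ℝ, (rotBlock n s)⁻¹ = rotBlock n (-s) := fun s =>
    inv_eq_right_inv (rot_mul_rot_neg n s)
  have hJX : Jmat n * rotBlock n t = rotBlock n t * Jmat n := by
    rw [← rotD_eq_J_mul, rotD_eq_mul_J]
  -- the family F and its entrywise x-derivative Fd
  set F : ℝ → Matrix (Fin n ⊕ Fin n) (Fin n ⊕ Fin n) ℂ :=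
    fun y => Matrix.fromBlocks (A y) 0 0 (B y) with hFdef
  have hAd' : ∀ i j, HasDerivAt (fun y => A y i j)
      ((Matrix.of fun i j => deriv (fun y => A y i j) x : Matrix (Fin n) (Fin n) ℂ) i j) x :=
    fun i j => (hAd x i j).hasDerivAt
  have hBd' : ∀ i j, HasDerivAt (fun y => B y i j)
      ((Matrix.of fun i j => deriv (fun y => B y i j) x : Matrix (Fin n) (Fin n) ℂ) i j) x :=
    fun i j => (hBd x i j).hasDerivAt
  set Ad : Matrix (Fin n) (Fin n) ℂ := Matrix.of fun i j => deriv (fun y => A y i j) x with hAdDef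
  set Bd : Matrix (Fin n) (Fin n) ℂ := Matrix.of fun i j => deriv (fun y => B y i j) x with hBdDef
  set Fd : Matrix (Fin n ⊕ Fin n) (Fin n ⊕ Fin n) ℂ := Matrix.fromBlocks Ad 0 0 Bd with hFdDef
  have hFd : ∀ i j, HasDerivAt (fun y => F y i j) (Fd i j) x := by
    intro i j
    rcases i with a | a <;> rcases j with b | b <;>
      simp only [hFdef, hFdDef, Matrix.fromBlocks_apply₁₁, Matrix.fromBlocks_apply₁₂,
        Matrix.fromBlocks_apply₂₁, Matrix.fromBlocks_apply₂₂, Matrix.zero_apply]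
    · exact hAd' a b
    · exact hasDerivAt_const x 0
    · exact hasDerivAt_const x 0
    · exact hBd' a b
  have hSxy : ∀ s y : ℝ, S s y = rotBlock n s * F y * rotBlock n (-s) := by
    intro s y; rw [hS s y, hXinv s]
  -- identification of St t x
  have hStval : St t x = Jmat n * (rotBlock n t * F x * rotBlock n (-t))
      - (rotBlock n t * F x * rotBlock n (-t)) * Jmat n := by
    have hder : ∀ i j, HasDerivAt (fun s => S s x i j)
        ((((rotD n t * F x + rotBlock n t * 0) * rotBlock n (-t)
          + (rotBlock n t * F x) * (-(rotD n (-t)))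
          : Matrix (Fin n ⊕ Fin n) (Fin n ⊕ Fin n) ℂ)) i j) t := by
      intro i j
      have h1 : ∀ i j, HasDerivAt (fun s => (rotBlock n s * F x) i j)
          (((rotD n t * F x + rotBlock n t * 0
            : Matrix (Fin n ⊕ Fin n) (Fin n ⊕ Fin n) ℂ)) i j) t :=
        fun i j => hasDerivAt_matrix_mul (hasDerivAt_rot n t)
          (hasDerivAt_const_entry t (F x)) i j
      have h2 := hasDerivAt_matrix_mul (U := fun s => rotBlock n s * F x)
        (V := fun s => rotBlock n (-s)) (U' := rotD n t * F x + rotBlock n t * 0)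
        (V' := -(rotD n (-t))) h1 (hasDerivAt_rot_neg n t) i j
      have hfun : (fun s => (rotBlock n s * F x * rotBlock n (-s)) i j)
          = fun s => S s x i j := by
        funext s; rw [hSxy s x]
      rwa [hfun] at h2
    have hmat : St t x = (rotD n t * F x + rotBlock n t * 0) * rotBlock n (-t)
        + (rotBlock n t * F x) * (-(rotD n (-t))) := by
      ext i j; exact (hSt t x i j).unique (hder i j)
    rw [hmat, rotD_eq_J_mul n t, rotD_eq_mul_J n (-t)]
    noncomm_ring
  -- identification of Sx t x
  have hSxval : Sx t x = rotBlock n t * Fd * rotBlock n (-t) := by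
    have hder : ∀ i j, HasDerivAt (fun y => S t y i j)
        (((((0 : Matrix _ _ ℂ) * F x + rotBlock n t * Fd) * rotBlock n (-t)
          + (rotBlock n t * F x) * 0
          : Matrix (Fin n ⊕ Fin n) (Fin n ⊕ Fin n) ℂ)) i j) x := by
      intro i j
      have h1 : ∀ i j, HasDerivAt (fun y => (rotBlock n t * F y) i j)
          ((((0 : Matrix _ _ ℂ) * F x + rotBlock n t * Fd
            : Matrix (Fin n ⊕ Fin n) (Fin n ⊕ Fin n) ℂ)) i j) x :=
        fun i j => hasDerivAt_matrix_mul (hasDerivAt_const_entry x (rotBlock n t)) hFd i j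
      have h2 := hasDerivAt_matrix_mul (U := fun y => rotBlock n t * F y)
        (V := fun _ => rotBlock n (-t)) (U' := (0 : Matrix _ _ ℂ) * F x + rotBlock n t * Fd)
        (V' := 0) h1 (hasDerivAt_const_entry x (rotBlock n (-t))) i j
      have hfun : (fun y => (rotBlock n t * F y * rotBlock n (-t)) i j)
          = fun y => S t y i j := by
        funext y; rw [hSxy t y]
      rwa [hfun] at h2
    have hmat : Sx t x = ((0 : Matrix _ _ ℂ) * F x + rotBlock n t * Fd) * rotBlock n (-t)
        + (rotBlock n t * F x) * 0 := by
      ext i j; exact (hSx t x i j).unique (hder i j)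
    rw [hmat]
    noncomm_ring
  -- algebraic facts about F and Fd
  have hFF : F x * F x = F x := by
    simp only [hFdef, Matrix.fromBlocks_multiply]
    simp [hAi x, hBi x]
  have hAanti : A x * Ad + Ad * A x = Ad := by
    ext i j
    have h1 := hasDerivAt_matrix_mul (U := A) (V := A) hAd' hAd' i j
    have hfun : (fun y => (A y * A y) i j) = fun y => A y i j := by
      funext y; rw [hAi y]
    rw [hfun] at h1
    have h2 := (hAd' i j).unique h1
    rw [Matrix.add_apply]
    rw [Matrix.add_apply] at h2
    linear_combination -h2
  have hBanti : B x * Bd + Bd * B x = Bd := by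
    ext i j
    have h1 := hasDerivAt_matrix_mul (U := B) (V := B) hBd' hBd' i j
    have hfun : (fun y => (B y * B y) i j) = fun y => B y i j := by
      funext y; rw [hBi y]
    rw [hfun] at h1
    have h2 := (hBd' i j).unique h1
    rw [Matrix.add_apply]
    rw [Matrix.add_apply] at h2
    linear_combination -h2
  have hanti : F x * Fd + Fd * F x = Fd := by
    simp only [hFdef, hFdDef, Matrix.fromBlocks_multiply, Matrix.fromBlocks_add]
    rw [show (Matrix.fromBlocks Ad 0 0 Bd : Matrix (Fin n ⊕ Fin n) (Fin n ⊕ Fin n) ℂ)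
      = Matrix.fromBlocks (A x * Ad + Ad * A x) 0 0 (B x * Bd + Bd * B x) by
        rw [hAanti, hBanti]]
    congr 1 <;> simp
  -- put everything together
  rw [hSxy t x, hStval, hSxval,
    conj_calc (rotBlock n t) (rotBlock n (-t)) (Jmat n) (F x) Fd hXY hYX hJX hFF hanti k]
  rw [hFdDef, fromBlocks_diag_pow]
  simp [Jmat, Matrix.fromBlocks_multiply, trace_fromBlocks]
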